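/- In the IOTA DAG model with constants b > 10·h_M − 6·h_1 + 3·M·ε_max + 2, κ_A > 1 + max{2·h_M, 3·h_M·(h_M + ε_min)/(h_M − 1)} and κ_B = κ_A + ε_min + 1: for any i and any event D_{i−1} ∈ Σ_{i−1} with D_{i−1} ⊆ {L(t_i) ≤ b} and P(D_{i−1} ∩ A_i) > 0, the conditional probability P(B_i | D_{i−1} ∩ A_i) is strictly positive, where A_i is the Step-A event and B_i is the Step-B event. -/

import Mathlib

/- ## Deterministic core of the IOTA DAG model.

Time is discrete, `t_n = n`.  A realization of the model is described by four
sequences `θ e x y : ℕ → ℕ`: vertex `n ≥ 1` arrives at time `n`, has POW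
duration `θ n`, observation delay `e n`, and parents `x n`, `y n`
(selected among the tips of the graph at time `n - e n`, truncated subtraction
encoding the convention `G(t) = G(t₀)` for `t < 0`).  The vertex `n` and the
directed edges `(n, x n)`, `(n, y n)` are added to the DAG at time `n + θ n`,
i.e. they are present in `G(m)` exactly when `n + θ n < m`. -/

namespace IotaDAG

/-- `V θ n`: set of vertices of the DAG at time `n` (completed POW). -/
def V (θ : ℕ → ℕ) (n : ℕ) : Set ℕ := {0} ∪ {k | 1 ≤ k ∧ k + θ k < n}

/-- `E θ x y n`: set of (solid) directed edges of the DAG at time `n`. -/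
def E (θ x y : ℕ → ℕ) (n : ℕ) : Set (ℕ × ℕ) :=
  {p | ∃ k, 1 ≤ k ∧ k + θ k < n ∧ (p = (k, x k) ∨ p = (k, y k))}

/-- `V' θ n`: set of arrived vertices whose POW is unfinished at time `n`. -/
def V' (θ : ℕ → ℕ) (n : ℕ) : Set ℕ := {k | 1 ≤ k ∧ k < n ∧ n ≤ k + θ k}

/-- Tips at time `n`: vertices of in-degree 0. -/
def tips (θ x y : ℕ → ℕ) (n : ℕ) : Set ℕ :=
  {v | v ∈ V θ n ∧ ∀ i, (i, v) ∉ E θ x y n}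

/-- Pending tips at time `n`: tips already selected as a parent by some arrived
vertex whose POW is unfinished. -/
def pend (θ x y : ℕ → ℕ) (n : ℕ) : Set ℕ :=
  {v | v ∈ tips θ x y n ∧ ∃ j ∈ V' θ n, x j = v ∨ y j = v}

/-- Free tips at time `n`: tips that are not pending. -/
def free (θ x y : ℕ → ℕ) (n : ℕ) : Set ℕ := tips θ x y n \ pend θ x y n

/-- `L(t_n)`: number of tips. -/
noncomputable def L (θ x y : ℕ → ℕ) (n : ℕ) : ℕ := (tips θ x y n).ncard

/-- `W(t_n)`: number of pending tips. -/
noncomputable def W (θ x y : ℕ → ℕ) (n : ℕ) : ℕ := (pend θ x y n).ncard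

/-- `F(t_n)`: number of free tips. -/
noncomputable def F (θ x y : ℕ → ℕ) (n : ℕ) : ℕ := (free θ x y n).ncard

/-- Validity of a realization: every arriving vertex selects both of its parents
among the tips of the graph observed with its delay. -/
def Valid (θ e x y : ℕ → ℕ) : Prop :=
  ∀ n, 1 ≤ n → x n ∈ tips θ x y (n - e n) ∧ y n ∈ tips θ x y (n - e n)

/-- Directed edge relation of the limiting graph `⋃ₜ G(t)`. -/
def edgeRel (x y : ℕ → ℕ) (a b : ℕ) : Prop := 1 ≤ a ∧ (x a = b ∨ y a = b)

/-- `Reach x y w u`: `u` is reachable from `w`, i.e. there is a directed path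
from `w` to `u` in the limiting graph `⋃ₜ G(t)`. -/
def Reach (x y : ℕ → ℕ) (w u : ℕ) : Prop := Relation.ReflTransGen (edgeRel x y) w u

end IotaDAG
namespace IotaDAG

/- ## The bottleneck construction (Steps A, B, C). -/

/-- Step-A (tidying) event for a realization: every vertex `j` arriving at a time in
`[i, i + κA)` has delay `εmin`, POW duration `hM`, selects a single parent
(`x j = y j`) which lies outside the current free tips whenever possible. -/
def StepA (θ e x y : ℕ → ℕ) (hM εmin κA i : ℕ) : Prop :=
  ∀ j, 1 ≤ j → i ≤ j → j < i + κA →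
    e j = εmin ∧ θ j = hM ∧ x j = y j ∧
    (¬ tips θ x y (j - εmin) ⊆ free θ x y j →
        x j ∈ tips θ x y (j - εmin) \ free θ x y j) ∧
    (tips θ x y (j - εmin) ⊆ free θ x y j → x j ∈ tips θ x y (j - εmin))

/-- `FB`: the set consisting of the `2 (hM + εmin)` smallest elements of the set of
free tips at time `i + κA`. -/
def FB (θ x y : ℕ → ℕ) (hM εmin κA i : ℕ) : Set ℕ :=
  {v | v ∈ free θ x y (i + κA) ∧
        (free θ x y (i + κA) ∩ Set.Iic v).ncard ≤ 2 * (hM + εmin)}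

/-- Step-B (preparation) event: every vertex `j` arriving at a time in
`[i + κA, i + κB)` has POW duration `hM`, delay `εmin`, and selects a single parent
among the tips it observes, avoiding the reserved set `FB`. -/
def StepB (θ e x y : ℕ → ℕ) (hM εmin κA κB i : ℕ) : Prop :=
  ∀ j, 1 ≤ j → i + κA ≤ j → j < i + κB →
    θ j = hM ∧ e j = εmin ∧ x j = y j ∧
    x j ∈ tips θ x y (j - εmin) \ FB θ x y hM εmin κA i

/-- `c_i := F(t_i + κB) + |V'(t_i + κB)|`. -/
noncomputable def ci (θ x y : ℕ → ℕ) (κB i : ℕ) : ℕ :=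
  F θ x y (i + κB) + (V' θ (i + κB)).ncard

/-- The labelling `ξ (i, j, k)` of the interchange structure: for `j = 1` it is the
`k`-th smallest element of `F(t_i + κB) ∪ V'(t_i + κB)` (1-indexed), and for `j ≥ 2`
it is the vertex arriving at time `i + κB - 1 + (j - 2) * c_i + k`. -/
noncomputable def ξ (θ x y : ℕ → ℕ) (κB i j k : ℕ) : ℕ :=
  if j ≤ 1 then Nat.nth (fun v => v ∈ free θ x y (i + κB) ∪ V' θ (i + κB)) (k - 1)
  else i + κB - 1 + (j - 2) * ci θ x y κB i + k

/-- Step-C (interchange) event: every vertex `v` arriving at a time in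
`[i + κB, i + κC]`, with additional label `(i, j, k)` where
`j = 2 + (v - (i + κB)) / c_i` and `k = (v - (i + κB)) % c_i + 1`, has POW duration
`hM`, delay `εmin`, and parents `x v = ξ (i, j-1, max 1 (k-1))`,
`y v = ξ (i, j-1, min (k+1) c_i)`. -/
noncomputable def StepC (θ e x y : ℕ → ℕ) (hM εmin κB κC i : ℕ) : Prop :=
  ∀ v, 1 ≤ v → i + κB ≤ v → v ≤ i + κC →
    θ v = hM ∧ e v = εmin ∧
    x v = ξ θ x y κB i (1 + (v - (i + κB)) / ci θ x y κB i)
            (max 1 ((v - (i + κB)) % ci θ x y κB i)) ∧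
    y v = ξ θ x y κB i (1 + (v - (i + κB)) / ci θ x y κB i)
            (min ((v - (i + κB)) % ci θ x y κB i + 2) (ci θ x y κB i))

end IotaDAG
namespace IotaDAG

/-- `Σ_i`: the σ-algebra generated by the random variables
`Θ_k, ε_k, X_k, Y_k` for `k = 1, …, i`. -/
def sigAlg {Ω : Type*} (Θ ε X Y : ℕ → Ω → ℕ) (i : ℕ) : MeasurableSpace Ω :=
  ⨆ k ∈ Finset.Icc 1 i,
    (MeasurableSpace.comap (Θ k) ⊤ ⊔ MeasurableSpace.comap (ε k) ⊤ ⊔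
      MeasurableSpace.comap (X k) ⊤ ⊔ MeasurableSpace.comap (Y k) ⊤)

end IotaDAG

open MeasureTheory ProbabilityTheory IotaDAG
open scoped Classical


/- ## Auxiliary lemmas -/

namespace IotaDAGAux

open IotaDAG

variable {θ e x y θ' e' x' y' : ℕ → ℕ} {n : ℕ}

lemma V_congr (hθ : ∀ k, 1 ≤ k → k < n → θ k = θ' k) : V θ n = V θ' n := by
  ext v
  simp only [V, Set.mem_union, Set.mem_singleton_iff, Set.mem_setOf_eq]
  constructor <;> rintro (hv | ⟨h1, h2⟩)
  · exact Or.inl hv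
  · exact Or.inr ⟨h1, by rw [← hθ v h1 (by omega)]; exact h2⟩
  · exact Or.inl hv
  · exact Or.inr ⟨h1, by rw [hθ v h1 (by omega)]; exact h2⟩

lemma E_congr (hθ : ∀ k, 1 ≤ k → k < n → θ k = θ' k)
    (hx : ∀ k, 1 ≤ k → k < n → x k = x' k)
    (hy : ∀ k, 1 ≤ k → k < n → y k = y' k) : E θ x y n = E θ' x' y' n := by
  ext p
  simp only [E, Set.mem_setOf_eq]
  constructor <;> rintro ⟨k, h1, h2, h3⟩
  · have hkn : k < n := by omega
    exact ⟨k, h1, by rw [← hθ k h1 hkn]; exact h2,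
      by rw [← hx k h1 hkn, ← hy k h1 hkn]; exact h3⟩
  · have hkn : k < n := by omega
    exact ⟨k, h1, by rw [hθ k h1 hkn]; exact h2,
      by rw [hx k h1 hkn, hy k h1 hkn]; exact h3⟩

lemma tips_congr (hθ : ∀ k, 1 ≤ k → k < n → θ k = θ' k)
    (hx : ∀ k, 1 ≤ k → k < n → x k = x' k)
    (hy : ∀ k, 1 ≤ k → k < n → y k = y' k) : tips θ x y n = tips θ' x' y' n := by
  unfold tips
  rw [V_congr hθ, E_congr hθ hx hy]

lemma V'_congr (hθ : ∀ k, 1 ≤ k → k < n → θ k = θ' k) : V' θ n = V' θ' n := by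
  ext v
  simp only [V', Set.mem_setOf_eq]
  constructor <;> rintro ⟨h1, h2, h3⟩
  · exact ⟨h1, h2, by rw [← hθ v h1 h2]; exact h3⟩
  · exact ⟨h1, h2, by rw [hθ v h1 h2]; exact h3⟩

lemma pend_congr (hθ : ∀ k, 1 ≤ k → k < n → θ k = θ' k)
    (hx : ∀ k, 1 ≤ k → k < n → x k = x' k)
    (hy : ∀ k, 1 ≤ k → k < n → y k = y' k) : pend θ x y n = pend θ' x' y' n := by
  unfold pend
  rw [tips_congr hθ hx hy, V'_congr hθ]
  ext v
  simp only [Set.mem_setOf_eq]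
  constructor <;> rintro ⟨hv, j, hj, hsel⟩
  · refine ⟨hv, j, hj, ?_⟩
    rw [← hx j hj.1 hj.2.1, ← hy j hj.1 hj.2.1]
    exact hsel
  · refine ⟨hv, j, hj, ?_⟩
    rw [hx j hj.1 hj.2.1, hy j hj.1 hj.2.1]
    exact hsel

lemma free_congr (hθ : ∀ k, 1 ≤ k → k < n → θ k = θ' k)
    (hx : ∀ k, 1 ≤ k → k < n → x k = x' k)
    (hy : ∀ k, 1 ≤ k → k < n → y k = y' k) : free θ x y n = free θ' x' y' n := by
  unfold free
  rw [tips_congr hθ hx hy, pend_congr hθ hx hy]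

lemma L_congr (hθ : ∀ k, 1 ≤ k → k < n → θ k = θ' k)
    (hx : ∀ k, 1 ≤ k → k < n → x k = x' k)
    (hy : ∀ k, 1 ≤ k → k < n → y k = y' k) : L θ x y n = L θ' x' y' n := by
  unfold L
  rw [tips_congr hθ hx hy]

lemma FB_congr {hM em κA i : ℕ} (hθ : ∀ k, 1 ≤ k → k < i + κA → θ k = θ' k)
    (hx : ∀ k, 1 ≤ k → k < i + κA → x k = x' k)
    (hy : ∀ k, 1 ≤ k → k < i + κA → y k = y' k) :
    FB θ x y hM em κA i = FB θ' x' y' hM em κA i := by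
  unfold FB
  rw [free_congr hθ hx hy]

lemma tips_subset_Iic : tips θ x y n ⊆ Set.Iic n := by
  rintro v ⟨hv, -⟩
  rcases hv with hv | ⟨h1, h2⟩
  · simp only [Set.mem_singleton_iff] at hv
    simp [hv]
  · exact Set.mem_Iic.2 (by omega)

lemma tips_finite : (tips θ x y n).Finite :=
  (Set.finite_Iic n).subset tips_subset_Iic

lemma free_subset_tips : free θ x y n ⊆ tips θ x y n := Set.diff_subset

lemma FB_subset_free {hM em κA i : ℕ} :
    FB θ x y hM em κA i ⊆ free θ x y (i + κA) := fun _ hv => hv.1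

lemma FB_finite {hM em κA i : ℕ} : (FB θ x y hM em κA i).Finite :=
  (tips_finite.subset free_subset_tips).subset FB_subset_free

lemma FB_ncard_le {hM em κA i : ℕ} :
    (FB θ x y hM em κA i).ncard ≤ 2 * (hM + em) := by
  classical
  have hfree_fin : (free θ x y (i + κA)).Finite :=
    tips_finite.subset free_subset_tips
  set f : ℕ → ℕ := fun v => (free θ x y (i + κA) ∩ Set.Iic v).ncard with hf
  have hmono : ∀ a ∈ FB θ x y hM em κA i, ∀ b ∈ FB θ x y hM em κA i,
      a < b → f a < f b := by
    intro a ha b hb hab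
    have hsub : free θ x y (i + κA) ∩ Set.Iic a ⊆ free θ x y (i + κA) ∩ Set.Iic b := by
      intro v hv
      exact ⟨hv.1, le_trans hv.2 (le_of_lt hab)⟩
    have hss : free θ x y (i + κA) ∩ Set.Iic a ⊂ free θ x y (i + κA) ∩ Set.Iic b := by
      refine (Set.ssubset_iff_of_subset hsub).2 ⟨b, ⟨hb.1, Set.mem_Iic.2 le_rfl⟩, ?_⟩
      intro hmem
      exact absurd (Set.mem_Iic.1 hmem.2) (by omega)
    exact Set.ncard_lt_ncard hss (hfree_fin.inter_of_left _)
  have hinj : Set.InjOn f (FB θ x y hM em κA i) := by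
    intro a ha b hb heq
    rcases lt_trichotomy a b with hlt | heq' | hgt
    · exact absurd heq (Nat.ne_of_lt (hmono a ha b hb hlt))
    · exact heq'
    · exact absurd heq.symm (Nat.ne_of_lt (hmono b hb a ha hgt))
  have himg : f '' FB θ x y hM em κA i ⊆ Set.Icc 1 (2 * (hM + em)) := by
    rintro c ⟨v, hv, rfl⟩
    refine Set.mem_Icc.2 ⟨?_, hv.2⟩
    have : (free θ x y (i + κA) ∩ Set.Iic v).Nonempty :=
      ⟨v, hv.1, Set.mem_Iic.2 le_rfl⟩
    exact (Set.ncard_pos (hfree_fin.inter_of_left _)).2 this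
  calc (FB θ x y hM em κA i).ncard
      = (f '' FB θ x y hM em κA i).ncard := (Set.ncard_image_of_injOn hinj).symm
    _ ≤ (Set.Icc 1 (2 * (hM + em))).ncard :=
        Set.ncard_le_ncard himg (Set.finite_Icc _ _)
    _ = 2 * (hM + em) := by
        rw [← Finset.coe_Icc, Set.ncard_coe_finset, Nat.card_Icc]
        omega

lemma card_of_gaps {K : Finset ℕ} {lo hi g : ℕ} (hg : 0 < g)
    (hsub : K ⊆ Finset.Icc lo hi)
    (hgap : ∀ a ∈ K, ∀ b ∈ K, a < b → a + g ≤ b) :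
    K.card ≤ (hi - lo) / g + 1 := by
  classical
  have hcard : K.card ≤ (Finset.range ((hi - lo) / g + 1)).card := by
    refine Finset.card_le_card_of_injOn (fun s => (s - lo) / g) ?_ ?_
    · intro s hs
      have hmem := Finset.mem_Icc.1 (hsub hs)
      simp only [Finset.coe_range, Set.mem_Iio, Finset.mem_coe, Finset.mem_range]
      have : (s - lo) / g ≤ (hi - lo) / g :=
        Nat.div_le_div_right (by omega)
      omega
    · intro a ha b hb heq
      simp only at heq
      by_contra hne
      rcases Nat.lt_or_ge a b with hlt | hge
      · have h1 : a + g ≤ b := hgap a ha b hb hlt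
        have h2 : lo ≤ a := (Finset.mem_Icc.1 (hsub ha)).1
        have h3 : (a - lo) + g ≤ b - lo := by omega
        have h4 : ((a - lo) + g) / g ≤ (b - lo) / g := Nat.div_le_div_right h3
        rw [Nat.add_div_right _ hg] at h4
        omega
      · have hlt : b < a := by omega
        have h1 : b + g ≤ a := hgap b hb a ha hlt
        have h2 : lo ≤ b := (Finset.mem_Icc.1 (hsub hb)).1
        have h3 : (b - lo) + g ≤ a - lo := by omega
        have h4 : ((b - lo) + g) / g ≤ (a - lo) / g := Nat.div_le_div_right h3
        rw [Nat.add_div_right _ hg] at h4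
        omega
  simpa using hcard


/-- The deterministic core lemma: under Step A, at any time
`n ∈ [i + κA - em, i + κA]` the number of tips exceeds `2 (hM + em)`. -/
lemma det_main {θ e x y : ℕ → ℕ} {hM em κA i n : ℕ}
    (hval : Valid θ e x y)
    (hθ1 : ∀ k, 1 ≤ k → 1 ≤ θ k)
    (he : ∀ k, 1 ≤ k → em ≤ e k)
    (hA : StepA θ e x y hM em κA i)
    (hhM : 2 ≤ hM) (hem : 1 ≤ em)
    (hκ : 3 * hM + 3 * em + 5 ≤ κA)
    (hn1 : i + κA ≤ n + em) (hn2 : n ≤ i + κA) :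
    2 * (hM + em) < (tips θ x y n).ncard := by
  classical
  have hn' : i + 3 * hM + 2 * em + 5 ≤ n := by omega
  -- Step A properties of every vertex in the relevant range
  have hSA : ∀ k, i + 1 ≤ k → k < i + κA →
      θ k = hM ∧ e k = em ∧ x k = y k ∧
      (¬ tips θ x y (k - em) ⊆ free θ x y k →
        x k ∈ tips θ x y (k - em) \ free θ x y k) := by
    intro k h1 h2
    obtain ⟨q1, q2, q3, q4, q5⟩ := hA k (by omega) (by omega) h2
    exact ⟨q2, q1, q3, q4⟩
  -- any picker of a completed step-A vertex arrives late
  have hpick : ∀ v k, 1 ≤ v → θ v = hM → 1 ≤ k → (x k = v ∨ y k = v) →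
      v + hM + em < k := by
    intro v k hv hθv hk hsel
    have hvt : v ∈ tips θ x y (k - e k) := by
      rcases hsel with hs | hs
      · rw [← hs]; exact (hval k hk).1
      · rw [← hs]; exact (hval k hk).2
    have hvV := hvt.1
    rcases hvV with hv0 | ⟨-, hlt⟩
    · simp only [Set.mem_singleton_iff] at hv0; omega
    · have := he k hk
      rw [hθv] at hlt
      omega
  -- key properties of the earliest picker of a dead vertex
  have hkey : ∀ v, i + 1 ≤ v → v + hM + 1 ≤ n → v ∉ tips θ x y n →
      ∃ k0, (1 ≤ k0 ∧ x k0 = v ∧ v + hM + em < k0 ∧ k0 + hM < n ∧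
        (∀ m, v + hM < m → m ≤ k0 + hM → v ∈ tips θ x y m) ∧
        v ∈ free θ x y k0 ∧
        (∀ k', 1 ≤ k' → (x k' = v ∨ y k' = v) → k0 ≤ k') ∧
        k0 = (if hv : ∃ k, 1 ≤ k ∧ (x k = v ∨ y k = v) then Nat.find hv else 0)) := by
    intro v hv1 hv2 hvt
    have hθv : θ v = hM := (hSA v hv1 (by omega)).1
    have hvV : v ∈ V θ n := Or.inr ⟨by omega, by rw [hθv]; omega⟩
    -- extract an edge responsible for the death of `v`
    have hvE : ∃ k, 1 ≤ k ∧ k + θ k < n ∧ (x k = v ∨ y k = v) := by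
      simp only [tips, Set.mem_setOf_eq, not_and, not_forall, not_not] at hvt
      obtain ⟨i', hi'⟩ := hvt hvV
      obtain ⟨k, hk1, hk2, hk3⟩ := hi'
      rcases hk3 with hk3 | hk3
      · have := (Prod.ext_iff.1 hk3).2
        exact ⟨k, hk1, hk2, Or.inl this.symm⟩
      · have := (Prod.ext_iff.1 hk3).2
        exact ⟨k, hk1, hk2, Or.inr this.symm⟩
    obtain ⟨kb, hkb1, hkb2, hkb3⟩ := hvE
    have hEx : ∃ k, 1 ≤ k ∧ (x k = v ∨ y k = v) := ⟨kb, hkb1, hkb3⟩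
    set k0 := Nat.find hEx with hk0def
    obtain ⟨hk01, hk0sel⟩ := Nat.find_spec hEx
    have hmin : ∀ k', k' < k0 → ¬(1 ≤ k' ∧ (x k' = v ∨ y k' = v)) :=
      fun k' hk' => Nat.find_min hEx hk'
    have hminle : ∀ k', 1 ≤ k' → (x k' = v ∨ y k' = v) → k0 ≤ k' :=
      fun k' h1 h2 => Nat.find_min' hEx ⟨h1, h2⟩
    have hP1 : v + hM + em < k0 := hpick v k0 (by omega) hθv hk01 hk0sel
    -- the known killer `kb` is a step-A vertex, so `k0 + hM < n`
    have hkbP : v + hM + em < kb := hpick v kb (by omega) hθv hkb1 hkb3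
    have hθkb : θ kb = hM := by
      have h1 : 1 ≤ θ kb := hθ1 kb hkb1
      exact (hSA kb (by omega) (by omega)).1
    have hk0kb : k0 ≤ kb := hminle kb hkb1 hkb3
    have hθk0 : θ k0 = hM := (hSA k0 (by omega) (by omega)).1
    have hP2 : k0 + hM < n := by rw [hθkb] at hkb2; omega
    have hxk0 : x k0 = v := by
      rcases hk0sel with hs | hs
      · exact hs
      · rw [(hSA k0 (by omega) (by omega)).2.2.1]; exact hs
    -- survival of v up to time k0 + hM
    have hsurv : ∀ m, v + hM < m → m ≤ k0 + hM → v ∈ tips θ x y m := by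
      intro m hm1 hm2
      refine ⟨Or.inr ⟨by omega, by rw [hθv]; omega⟩, ?_⟩
      rintro i' ⟨k, hk1, hk2, hk3⟩
      have hsel : x k = v ∨ y k = v := by
        rcases hk3 with hk3 | hk3
        · exact Or.inl (Prod.ext_iff.1 hk3).2.symm
        · exact Or.inr (Prod.ext_iff.1 hk3).2.symm
      have hk0le : k0 ≤ k := hminle k hk1 hsel
      have hkP : v + hM + em < k := hpick v k (by omega) hθv hk1 hsel
      have hθk : θ k = hM := by
        have h1 : 1 ≤ θ k := hθ1 k hk1
        exact (hSA k (by omega) (by omega)).1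
      rw [hθk] at hk2
      omega
    have hfree : v ∈ free θ x y k0 := by
      refine ⟨hsurv k0 (by omega) (by omega), ?_⟩
      rintro ⟨-, j', hj'V, hj'sel⟩
      exact hmin j' hj'V.2.1 ⟨hj'V.1, hj'sel⟩
    exact ⟨k0, hk01, hxk0, hP1, hP2, hsurv, hfree, hminle, by rw [hk0def, dif_pos hEx]⟩
  -- the counting
  set kf : ℕ → ℕ :=
    fun v => if hv : ∃ k, 1 ≤ k ∧ (x k = v ∨ y k = v) then Nat.find hv else 0 with hkf
  set T : Finset ℕ := Finset.Icc (i + 1) (n - hM - 1) with hT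
  set Dd : Finset ℕ := T.filter (fun v => v ∉ tips θ x y n) with hDd
  have hDmem : ∀ v ∈ Dd, i + 1 ≤ v ∧ v + hM + 1 ≤ n ∧ v ∉ tips θ x y n := by
    intro v hv
    have h1 := Finset.mem_filter.1 hv
    have h2 := Finset.mem_Icc.1 h1.1
    exact ⟨h2.1, by omega, h1.2⟩
  have hkey' : ∀ v ∈ Dd, 1 ≤ kf v ∧ x (kf v) = v ∧ v + hM + em < kf v ∧
      kf v + hM < n ∧ (∀ m, v + hM < m → m ≤ kf v + hM → v ∈ tips θ x y m) ∧
      v ∈ free θ x y (kf v) ∧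
      (∀ k', 1 ≤ k' → (x k' = v ∨ y k' = v) → kf v ≤ k') := by
    intro v hv
    obtain ⟨h1, h2, h3⟩ := hDmem v hv
    obtain ⟨k0, q1, q2, q3, q4, q5, q6, q7, q8⟩ := hkey v h1 h2 h3
    have hkfv : kf v = k0 := by simp only [hkf]; exact q8.symm
    rw [hkfv]
    exact ⟨q1, q2, q3, q4, q5, q6, q7⟩
  set g := hM + em + 1 with hg
  -- gaps between the earliest pickers
  have hgap : ∀ v ∈ Dd, ∀ w ∈ Dd, kf v < kf w → kf v + g ≤ kf w := by
    intro v hv w hw hlt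
    obtain ⟨p1, p2, p3, p4, p5, p6, p7⟩ := hkey' v hv
    obtain ⟨q1, q2, q3, q4, q5, q6, q7⟩ := hkey' w hw
    by_contra hcon
    have hle : kf w ≤ kf v + hM + em := by omega
    -- v is an observed tip at time kf w - em
    have hvd := hDmem v hv
    have hwd := hDmem w hw
    have h1 : v ∈ tips θ x y (kf w - em) :=
      p5 (kf w - em) (by omega) (by omega)
    -- v is not free at time kf w
    have hθkv : θ (kf v) = hM := (hSA (kf v) (by omega) (by omega)).1
    have h2 : v ∉ free θ x y (kf w) := by
      by_cases hc : kf w ≤ kf v + hM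
      · intro hfr
        exact hfr.2 ⟨hfr.1, kf v, ⟨p1, hlt, by rw [hθkv]; omega⟩, Or.inl p2⟩
      · intro hfr
        exact hfr.1.2 (kf v) ⟨kf v, p1, by rw [hθkv]; omega, Or.inl (by rw [p2])⟩
    have h3 : ¬ tips θ x y (kf w - em) ⊆ free θ x y (kf w) := fun hsub => h2 (hsub h1)
    have h4 := (hSA (kf w) (by omega) (by omega)).2.2.2 h3
    rw [q2] at h4
    exact h4.2 q6
  have hinj : Set.InjOn kf ↑Dd := by
    intro a ha b hb heq
    obtain ⟨p1, p2, p3, p4, p5, p6, p7⟩ := hkey' a ha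
    obtain ⟨q1, q2, q3, q4, q5, q6, q7⟩ := hkey' b hb
    rw [← p2, ← q2, heq]
  set K : Finset ℕ := Dd.image kf with hK
  have hKcard : K.card = Dd.card := Finset.card_image_of_injOn hinj
  have hKsub : K ⊆ Finset.Icc (i + hM + em + 2) (n - hM - 1) := by
    intro k hk
    obtain ⟨v, hv, rfl⟩ := Finset.mem_image.1 hk
    obtain ⟨p1, p2, p3, p4, p5, p6, p7⟩ := hkey' v hv
    have := (hDmem v hv).1
    exact Finset.mem_Icc.2 ⟨by omega, by omega⟩
  have hKgap : ∀ a ∈ K, ∀ b ∈ K, a < b → a + g ≤ b := by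
    intro a ha b hb hab
    obtain ⟨va, hva, rfl⟩ := Finset.mem_image.1 ha
    obtain ⟨vb, hvb, rfl⟩ := Finset.mem_image.1 hb
    exact hgap va hva vb hvb hab
  have hDdcard : Dd.card ≤ (n - hM - 1 - (i + hM + em + 2)) / g + 1 := by
    rw [← hKcard]
    exact card_of_gaps (by omega) hKsub hKgap
  -- arithmetic
  set c' := n - hM - 1 - i with hc'
  have hTcard : T.card = c' := by rw [hT, Nat.card_Icc]; omega
  have hc'2 : 2 * g + 2 ≤ c' := by omega
  set d := c' - (2 * g + 1) with hd
  have hq : (n - hM - 1 - (i + hM + em + 2)) / g ≤ c' - 2 * g := by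
    have he1 : n - hM - 1 - (i + hM + em + 2) = g + d := by omega
    have he2 : c' - 2 * g + 1 = d + 2 := by omega
    have hlt : g + d < (c' - 2 * g + 1) * g := by
      rw [he2]
      have hdd : d ≤ g * d := Nat.le_mul_of_pos_left d (by omega)
      have hexp : (d + 2) * g = g * d + 2 * g := by ring
      omega
    have := (Nat.div_lt_iff_lt_mul (by omega : 0 < g)).2 (he1 ▸ hlt)
    omega
  -- survivors
  set Sv : Finset ℕ := T.filter (fun v => v ∈ tips θ x y n) with hSv
  have hsplit : Sv.card + Dd.card = T.card := by
    rw [hSv, hDd]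
    exact Finset.card_filter_add_card_filter_not _
  have hSvcard : 2 * (hM + em) < Sv.card := by omega
  have hsub2 : ↑Sv ⊆ tips θ x y n := by
    intro v hv
    exact (Finset.mem_filter.1 hv).2
  have := Set.ncard_le_ncard hsub2 tips_finite
  rw [Set.ncard_coe_finset] at this
  omega

lemma det_exists {θ e x y : ℕ → ℕ} {hM em κA i n : ℕ}
    (hval : Valid θ e x y)
    (hθ1 : ∀ k, 1 ≤ k → 1 ≤ θ k)
    (he : ∀ k, 1 ≤ k → em ≤ e k)
    (hA : StepA θ e x y hM em κA i)
    (hhM : 2 ≤ hM) (hem : 1 ≤ em)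
    (hκ : 3 * hM + 3 * em + 5 ≤ κA)
    (hn1 : i + κA ≤ n + em) (hn2 : n ≤ i + κA) :
    ∃ v, v ∈ tips θ x y n ∧ v ∉ FB θ x y hM em κA i := by
  have h1 := det_main hval hθ1 he hA hhM hem hκ hn1 hn2
  have h2 : (FB θ x y hM em κA i).ncard ≤ 2 * (hM + em) := FB_ncard_le
  by_contra hcon
  push_neg at hcon
  have hsub : tips θ x y n ⊆ FB θ x y hM em κA i := fun v hv => hcon v hv
  have := Set.ncard_le_ncard hsub FB_finite
  omega


section Meas

variable {Ω : Type*}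

lemma sigAlg_mono (Θ ε X Y : ℕ → Ω → ℕ) {a b : ℕ} (hab : a ≤ b) :
    sigAlg Θ ε X Y a ≤ sigAlg Θ ε X Y b := by
  unfold sigAlg
  refine iSup₂_le fun k hk => ?_
  have hk' : k ∈ Finset.Icc 1 b := by
    simp only [Finset.mem_Icc] at hk ⊢
    omega
  exact le_iSup₂_of_le k hk' le_rfl

lemma sigAlg_le {mΩ : MeasurableSpace Ω} (Θ ε X Y : ℕ → Ω → ℕ)
    (hΘm : ∀ n, Measurable (Θ n)) (hεm : ∀ n, Measurable (ε n))
    (hXm : ∀ n, Measurable (X n)) (hYm : ∀ n, Measurable (Y n)) (m : ℕ) :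
    sigAlg Θ ε X Y m ≤ mΩ := by
  unfold sigAlg
  refine iSup₂_le fun k _ => ?_
  refine sup_le (sup_le (sup_le ?_ ?_) ?_) ?_
  · exact MeasurableSpace.comap_le_iff_le_map.2 fun s _ => (hΘm k) trivial
  · exact MeasurableSpace.comap_le_iff_le_map.2 fun s _ => (hεm k) trivial
  · exact MeasurableSpace.comap_le_iff_le_map.2 fun s _ => (hXm k) trivial
  · exact MeasurableSpace.comap_le_iff_le_map.2 fun s _ => (hYm k) trivial

lemma coord_meas (Θ ε X Y : ℕ → Ω → ℕ) (m k : ℕ) (h1 : 1 ≤ k) (h2 : k ≤ m) :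
    Measurable[sigAlg Θ ε X Y m] (Θ k) ∧ Measurable[sigAlg Θ ε X Y m] (ε k) ∧
    Measurable[sigAlg Θ ε X Y m] (X k) ∧ Measurable[sigAlg Θ ε X Y m] (Y k) := by
  have hk : k ∈ Finset.Icc 1 m := Finset.mem_Icc.2 ⟨h1, h2⟩
  have hle : (MeasurableSpace.comap (Θ k) ⊤ ⊔ MeasurableSpace.comap (ε k) ⊤ ⊔
      MeasurableSpace.comap (X k) ⊤ ⊔ MeasurableSpace.comap (Y k) ⊤) ≤
      sigAlg Θ ε X Y m := le_iSup₂_of_le k hk le_rfl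
  have hcΘ : MeasurableSpace.comap (Θ k) ⊤ ≤ sigAlg Θ ε X Y m :=
    le_trans (le_sup_of_le_left (le_sup_of_le_left le_sup_left)) hle
  have hcε : MeasurableSpace.comap (ε k) ⊤ ≤ sigAlg Θ ε X Y m :=
    le_trans (le_sup_of_le_left (le_sup_of_le_left le_sup_right)) hle
  have hcX : MeasurableSpace.comap (X k) ⊤ ≤ sigAlg Θ ε X Y m :=
    le_trans (le_sup_of_le_left le_sup_right) hle
  have hcY : MeasurableSpace.comap (Y k) ⊤ ≤ sigAlg Θ ε X Y m :=
    le_trans le_sup_right hle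
  refine ⟨fun s _ => hcΘ _ ⟨s, trivial, rfl⟩, fun s _ => hcε _ ⟨s, trivial, rfl⟩,
    fun s _ => hcX _ ⟨s, trivial, rfl⟩, fun s _ => hcY _ ⟨s, trivial, rfl⟩⟩


/-- Decoding functions from the finite trajectory. -/
noncomputable def θof (m : ℕ) (g : Fin m → ℕ × ℕ × ℕ × ℕ) : ℕ → ℕ :=
  fun t => if ht : 1 ≤ t ∧ t ≤ m then (g ⟨t - 1, by omega⟩).1 else 0

noncomputable def eof (m : ℕ) (g : Fin m → ℕ × ℕ × ℕ × ℕ) : ℕ → ℕ :=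
  fun t => if ht : 1 ≤ t ∧ t ≤ m then (g ⟨t - 1, by omega⟩).2.1 else 0

noncomputable def xof (m : ℕ) (g : Fin m → ℕ × ℕ × ℕ × ℕ) : ℕ → ℕ :=
  fun t => if ht : 1 ≤ t ∧ t ≤ m then (g ⟨t - 1, by omega⟩).2.2.1 else 0

noncomputable def yof (m : ℕ) (g : Fin m → ℕ × ℕ × ℕ × ℕ) : ℕ → ℕ :=
  fun t => if ht : 1 ≤ t ∧ t ≤ m then (g ⟨t - 1, by omega⟩).2.2.2 else 0

lemma all_meas {α : Type*} [MeasurableSpace α] [Countable α]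
    (hsing : ∀ a : α, MeasurableSet {a}) (s : Set α) : MeasurableSet s := by
  rw [← Set.biUnion_of_singleton s]
  exact MeasurableSet.biUnion (Set.to_countable s) fun a _ => hsing a

lemma pi_all_meas {m : ℕ} (s : Set (Fin m → ℕ × ℕ × ℕ × ℕ)) : MeasurableSet s := by
  refine all_meas (fun g => ?_) s
  have : ({g} : Set (Fin m → ℕ × ℕ × ℕ × ℕ)) = Set.pi Set.univ (fun k => {g k}) := by
    ext g'
    simp [funext_iff, Set.mem_pi, eq_comm]
  rw [this]
  exact MeasurableSet.univ_pi fun k => measurableSet_singleton _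

/-- The trajectory map. -/
def Zmap (Θ ε X Y : ℕ → Ω → ℕ) (m : ℕ) : Ω → (Fin m → ℕ × ℕ × ℕ × ℕ) :=
  fun ω k => (Θ (k.val + 1) ω, ε (k.val + 1) ω, X (k.val + 1) ω, Y (k.val + 1) ω)

lemma Zmap_meas (Θ ε X Y : ℕ → Ω → ℕ) (m : ℕ) :
    Measurable[sigAlg Θ ε X Y m] (Zmap Θ ε X Y m) := by
  apply @measurable_pi_lambda _ _ _ (sigAlg Θ ε X Y m)
  intro k
  obtain ⟨m1, m2, m3, m4⟩ := coord_meas Θ ε X Y m (k.val + 1) (by omega) (by omega)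
  exact m1.prodMk (m2.prodMk (m3.prodMk m4))

lemma Zmap_agree (Θ ε X Y : ℕ → Ω → ℕ) (m : ℕ) (ω : Ω) :
    ∀ k, 1 ≤ k → k ≤ m →
      Θ k ω = θof m (Zmap Θ ε X Y m ω) k ∧ ε k ω = eof m (Zmap Θ ε X Y m ω) k ∧
      X k ω = xof m (Zmap Θ ε X Y m ω) k ∧ Y k ω = yof m (Zmap Θ ε X Y m ω) k := by
  intro k h1 h2
  have ht : 1 ≤ k ∧ k ≤ m := ⟨h1, h2⟩
  have hk1 : k - 1 + 1 = k := by omega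
  refine ⟨?_, ?_, ?_, ?_⟩
  · rw [θof, dif_pos ht]; show Θ k ω = Θ (k - 1 + 1) ω; rw [hk1]
  · rw [eof, dif_pos ht]; show ε k ω = ε (k - 1 + 1) ω; rw [hk1]
  · rw [xof, dif_pos ht]; show X k ω = X (k - 1 + 1) ω; rw [hk1]
  · rw [yof, dif_pos ht]; show Y k ω = Y (k - 1 + 1) ω; rw [hk1]

lemma measSet_pre (Θ ε X Y : ℕ → Ω → ℕ) (m : ℕ)
    (P : (ℕ → ℕ) → (ℕ → ℕ) → (ℕ → ℕ) → (ℕ → ℕ) → Prop)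
    (hP : ∀ θ1 e1 x1 y1 θ2 e2 x2 y2 : ℕ → ℕ,
      (∀ k, 1 ≤ k → k ≤ m → θ1 k = θ2 k ∧ e1 k = e2 k ∧ x1 k = x2 k ∧ y1 k = y2 k) →
      P θ1 e1 x1 y1 → P θ2 e2 x2 y2) :
    MeasurableSet[sigAlg Θ ε X Y m]
      {ω | P (fun t => Θ t ω) (fun t => ε t ω) (fun t => X t ω) (fun t => Y t ω)} := by
  have hkey : {ω | P (fun t => Θ t ω) (fun t => ε t ω) (fun t => X t ω) (fun t => Y t ω)}
      = (Zmap Θ ε X Y m) ⁻¹'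
        {g | P (θof m g) (eof m g) (xof m g) (yof m g)} := by
    ext ω
    simp only [Set.mem_setOf_eq, Set.mem_preimage]
    constructor
    · exact fun hω => hP _ _ _ _ _ _ _ _ (Zmap_agree Θ ε X Y m ω) hω
    · refine fun hω => hP _ _ _ _ _ _ _ _ ?_ hω
      intro k h1 h2
      obtain ⟨a1, a2, a3, a4⟩ := Zmap_agree Θ ε X Y m ω k h1 h2
      exact ⟨a1.symm, a2.symm, a3.symm, a4.symm⟩
  rw [hkey]
  exact Zmap_meas Θ ε X Y m (pi_all_meas _)

lemma measFun_pre (Θ ε X Y : ℕ → Ω → ℕ) (m : ℕ)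
    (F : (ℕ → ℕ) → (ℕ → ℕ) → (ℕ → ℕ) → (ℕ → ℕ) → ℝ)
    (hF : ∀ θ1 e1 x1 y1 θ2 e2 x2 y2 : ℕ → ℕ,
      (∀ k, 1 ≤ k → k ≤ m → θ1 k = θ2 k ∧ e1 k = e2 k ∧ x1 k = x2 k ∧ y1 k = y2 k) →
      F θ1 e1 x1 y1 = F θ2 e2 x2 y2) :
    Measurable[sigAlg Θ ε X Y m]
      (fun ω => F (fun t => Θ t ω) (fun t => ε t ω) (fun t => X t ω) (fun t => Y t ω)) := by
  have hkey : (fun ω => F (fun t => Θ t ω) (fun t => ε t ω) (fun t => X t ω) (fun t => Y t ω))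
      = (fun g => F (θof m g) (eof m g) (xof m g) (yof m g)) ∘ (Zmap Θ ε X Y m) :=
    funext fun ω => hF _ _ _ _ _ _ _ _ (Zmap_agree Θ ε X Y m ω)
  rw [hkey]
  exact Measurable.comp (fun s _ => pi_all_meas _) (Zmap_meas Θ ε X Y m)

end Meas

end IotaDAGAux

/-- With `b > 10 h_M - 6 h_1 + 3 M ε_max + 2`,
`κ_A > 1 + max {2 h_M, 3 h_M (h_M + ε_min) / (h_M - 1)}` and `κ_B = κ_A + ε_min + 1`:
for any `i` and any `D ∈ Σ_{i-1}` with `D ⊆ {L(t_i) ≤ b}` and `P(D ∩ A_i) > 0`,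
the Step-B event `B_i` has strictly positive conditional probability given `D ∩ A_i`. -/
theorem stepB_positive_probability
    {Ω : Type*} {mΩ : MeasurableSpace Ω}
    (μ : MeasureTheory.Measure Ω) [MeasureTheory.IsProbabilityMeasure μ]
    (M : ℕ) (hM2 : 2 ≤ M)
    (h : ℕ → ℕ) (hpos : 0 < h 1) (hmono : StrictMonoOn h (Set.Icc 1 M))
    (Iε : Finset ℕ) (hIε : Iε.Nonempty) (hεmin : 0 < Iε.min' hIε)
    (pΘ pε : ℕ → ℝ)
    (hpΘ : ∀ k ∈ Finset.Icc 1 M, 0 < pΘ k) (hpΘsum : ∑ k ∈ Finset.Icc 1 M, pΘ k = 1)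
    (hpε : ∀ j ∈ Iε, 0 < pε j) (hpεsum : ∑ j ∈ Iε, pε j = 1)
    (Θ ε X Y : ℕ → Ω → ℕ)
    (hΘm : ∀ n, Measurable (Θ n)) (hεm : ∀ n, Measurable (ε n))
    (hXm : ∀ n, Measurable (X n)) (hYm : ∀ n, Measurable (Y n))
    -- almost surely the realization is a valid trajectory of the model
    (hmodel : ∀ᵐ ω ∂μ,
      (∀ n, 1 ≤ n → (∃ k, 1 ≤ k ∧ k ≤ M ∧ Θ n ω = h k) ∧ ε n ω ∈ Iε) ∧
      Valid (fun m => Θ m ω) (fun m => ε m ω) (fun m => X m ω) (fun m => Y m ω))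
    -- the conditional law of `(Θ_n, ε_n, X_n, Y_n)` given `Σ_{n-1}`:
    -- parents are uniform with replacement on the delayed set of tips
    (hlaw : ∀ n, 1 ≤ n → ∀ k ∈ Finset.Icc 1 M, ∀ j ∈ Iε, ∀ v v' : ℕ,
      ∀ D : Set Ω, MeasurableSet[sigAlg Θ ε X Y (n - 1)] D →
        (μ (D ∩ {ω | Θ n ω = h k ∧ ε n ω = j ∧ X n ω = v ∧ Y n ω = v'})).toReal
          = ∫ ω in D,
              (if v ∈ tips (fun m => Θ m ω) (fun m => X m ω) (fun m => Y m ω) (n - j) ∧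
                  v' ∈ tips (fun m => Θ m ω) (fun m => X m ω) (fun m => Y m ω) (n - j)
                then pΘ k * pε j /
                  (L (fun m => Θ m ω) (fun m => X m ω) (fun m => Y m ω) (n - j) : ℝ) ^ 2
                else 0) ∂μ)
    (b : ℝ)
    (hb : 10 * (h M : ℝ) - 6 * (h 1 : ℝ) + 3 * M * (Iε.max' hIε : ℝ) + 2 < b)
    (κA κB : ℕ)
    (hκA : 1 + max (2 * (h M : ℝ))
        (3 * (h M : ℝ) * ((h M : ℝ) + (Iε.min' hIε : ℝ)) / ((h M : ℝ) - 1)) < (κA : ℝ))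
    (hκB : κB = κA + Iε.min' hIε + 1)
    (hhM : 1 < h M)
    (i : ℕ) (D : Set Ω)
    (hD : MeasurableSet[sigAlg Θ ε X Y (i - 1)] D)
    (hDsub : D ⊆ {ω | (L (fun m => Θ m ω) (fun m => X m ω) (fun m => Y m ω) i : ℝ) ≤ b})
    (hDApos : 0 < μ (D ∩ {ω | StepA (fun m => Θ m ω) (fun m => ε m ω) (fun m => X m ω)
      (fun m => Y m ω) (h M) (Iε.min' hIε) κA i})) :
    0 < μ[|D ∩ {ω | StepA (fun m => Θ m ω) (fun m => ε m ω) (fun m => X m ω)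
        (fun m => Y m ω) (h M) (Iε.min' hIε) κA i}]
      {ω | StepB (fun m => Θ m ω) (fun m => ε m ω) (fun m => X m ω)
        (fun m => Y m ω) (h M) (Iε.min' hIε) κA κB i} := by
  classical
  have hem1 : 1 ≤ Iε.min' hIε := hεmin
  set em := Iε.min' hIε with hemdef
  subst hκB
  have hhM2 : 2 ≤ h M := hhM
  have hemIε : em ∈ Iε := by rw [hemdef]; exact Finset.min'_mem Iε hIε
  -- integer bound on κA
  have hκnat : 3 * h M + 3 * em + 5 ≤ κA := by
    have hMr : (2 : ℝ) ≤ (h M : ℝ) := by exact_mod_cast hhM2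
    have hemr : (1 : ℝ) ≤ (em : ℝ) := by exact_mod_cast hem1
    have hdiv : (3 * (h M : ℝ) + 3 * (em : ℝ) + 3)
        ≤ 3 * (h M : ℝ) * ((h M : ℝ) + (em : ℝ)) / ((h M : ℝ) - 1) := by
      rw [le_div_iff₀ (by linarith)]
      nlinarith
    have hmax := le_max_right (2 * (h M : ℝ))
      (3 * (h M : ℝ) * ((h M : ℝ) + (em : ℝ)) / ((h M : ℝ) - 1))
    have hlt : ((3 * h M + 3 * em + 4 : ℕ) : ℝ) < (κA : ℝ) := by push_cast; linarith
    have := Nat.cast_lt.1 hlt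
    omega
  set ASet : Set Ω := {ω | StepA (fun m => Θ m ω) (fun m => ε m ω) (fun m => X m ω)
      (fun m => Y m ω) (h M) em κA i} with hASet
  set DA : Set Ω := D ∩ ASet with hDAdef
  set Mdl : Set Ω := {ω |
      (∀ n, 1 ≤ n → (∃ k, 1 ≤ k ∧ k ≤ M ∧ Θ n ω = h k) ∧ ε n ω ∈ Iε) ∧
      Valid (fun m => Θ m ω) (fun m => ε m ω) (fun m => X m ω) (fun m => Y m ω)} with hMdl
  have hMdlnull : μ Mdlᶜ = 0 := by
    have hae := MeasureTheory.ae_iff.1 hmodel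
    have : Mdlᶜ = {a | ¬ ((∀ n, 1 ≤ n → (∃ k, 1 ≤ k ∧ k ≤ M ∧ Θ n a = h k) ∧ ε n a ∈ Iε) ∧
        Valid (fun m => Θ m a) (fun m => ε m a) (fun m => X m a) (fun m => Y m a))} := rfl
    rw [this]
    exact hae
  set Bs : ℕ → Set Ω := fun l => {ω | ∀ j', 1 ≤ j' → i + κA ≤ j' → j' < i + κA + l →
      Θ j' ω = h M ∧ ε j' ω = em ∧ X j' ω = Y j' ω ∧
      X j' ω ∈ tips (fun m => Θ m ω) (fun m => X m ω) (fun m => Y m ω) (j' - em) \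
        FB (fun m => Θ m ω) (fun m => X m ω) (fun m => Y m ω) (h M) em κA i} with hBs
  -- measurability of the Step-A event
  have hmeasA : ∀ m', i + κA ≤ m' + 1 → MeasurableSet[sigAlg Θ ε X Y m'] ASet := by
    intro m' hm'
    refine IotaDAGAux.measSet_pre Θ ε X Y m'
      (fun θf ef xf yf => StepA θf ef xf yf (h M) em κA i) ?_
    intro θ1 e1 x1 y1 θ2 e2 x2 y2 hag hA j' h1 h2 h3
    obtain ⟨q1, q2, q3, q4, q5⟩ := hA j' h1 h2 h3
    have hagj' := hag j' h1 (by omega)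
    have ht : tips θ2 x2 y2 (j' - em) = tips θ1 x1 y1 (j' - em) := by
      refine (IotaDAGAux.tips_congr ?_ ?_ ?_).symm <;> intro k hk1 hk2
      · exact (hag k hk1 (by omega)).1
      · exact (hag k hk1 (by omega)).2.2.1
      · exact (hag k hk1 (by omega)).2.2.2
    have hfr : free θ2 x2 y2 j' = free θ1 x1 y1 j' := by
      refine (IotaDAGAux.free_congr ?_ ?_ ?_).symm <;> intro k hk1 hk2
      · exact (hag k hk1 (by omega)).1
      · exact (hag k hk1 (by omega)).2.2.1
      · exact (hag k hk1 (by omega)).2.2.2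
    refine ⟨by rw [← hagj'.2.1]; exact q1, by rw [← hagj'.1]; exact q2,
      by rw [← hagj'.2.2.1, ← hagj'.2.2.2]; exact q3, ?_, ?_⟩
    · intro hns
      rw [ht, hfr] at hns ⊢
      rw [← hagj'.2.2.1]
      exact q4 hns
    · intro hs
      rw [ht, hfr] at hs
      rw [ht, ← hagj'.2.2.1]
      exact q5 hs
  -- measurability of the partial Step-B events
  have hmeasBs : ∀ l m', i + κA + l ≤ m' + 1 → i + κA ≤ m' + 1 →
      MeasurableSet[sigAlg Θ ε X Y m'] (Bs l) := by
    intro l m' hm' hm2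
    refine IotaDAGAux.measSet_pre Θ ε X Y m'
      (fun θf ef xf yf => ∀ j', 1 ≤ j' → i + κA ≤ j' → j' < i + κA + l →
        θf j' = h M ∧ ef j' = em ∧ xf j' = yf j' ∧
        xf j' ∈ tips θf xf yf (j' - em) \ FB θf xf yf (h M) em κA i) ?_
    intro θ1 e1 x1 y1 θ2 e2 x2 y2 hag hB j' h1 h2 h3
    obtain ⟨q1, q2, q3, q4⟩ := hB j' h1 h2 h3
    have hagj' := hag j' h1 (by omega)
    have ht : tips θ1 x1 y1 (j' - em) = tips θ2 x2 y2 (j' - em) := by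
      refine IotaDAGAux.tips_congr ?_ ?_ ?_ <;> intro k hk1 hk2
      · exact (hag k hk1 (by omega)).1
      · exact (hag k hk1 (by omega)).2.2.1
      · exact (hag k hk1 (by omega)).2.2.2
    have hFBeq : FB θ1 x1 y1 (h M) em κA i = FB θ2 x2 y2 (h M) em κA i := by
      refine IotaDAGAux.FB_congr ?_ ?_ ?_ <;> intro k hk1 hk2
      · exact (hag k hk1 (by omega)).1
      · exact (hag k hk1 (by omega)).2.2.1
      · exact (hag k hk1 (by omega)).2.2.2
    refine ⟨by rw [← hagj'.1]; exact q1, by rw [← hagj'.2.1]; exact q2,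
      by rw [← hagj'.2.2.1, ← hagj'.2.2.2]; exact q3, ?_⟩
    rw [← hagj'.2.2.1, ← ht, ← hFBeq]
    exact q4
  -- the main induction
  have key : ∀ l, l ≤ em + 1 → 0 < μ (DA ∩ Bs l) := by
    intro l
    induction l with
    | zero =>
      intro _
      have hB0 : Bs 0 = Set.univ :=
        Set.eq_univ_iff_forall.2 fun ω j' h1 h2 h3 => absurd h3 (by omega)
      rw [hB0, Set.inter_univ]
      exact hDApos
    | succ l ih =>
      intro hl1
      have hl : l ≤ em := by omega
      have hpos := ih (by omega)
      set j : ℕ := i + κA + l with hjdef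
      have hj1 : 1 ≤ j := by omega
      -- the observed-tips event
      set Tv : ℕ → Set Ω := fun v => {ω |
        v ∈ tips (fun m => Θ m ω) (fun m => X m ω) (fun m => Y m ω) (j - em) ∧
        v ∉ FB (fun m => Θ m ω) (fun m => X m ω) (fun m => Y m ω) (h M) em κA i} with hTv
      have hmeasTv : ∀ v, MeasurableSet[sigAlg Θ ε X Y (j - 1)] (Tv v) := by
        intro v
        refine IotaDAGAux.measSet_pre Θ ε X Y (j - 1)
          (fun θf ef xf yf => v ∈ tips θf xf yf (j - em) ∧
            v ∉ FB θf xf yf (h M) em κA i) ?_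
        intro θ1 e1 x1 y1 θ2 e2 x2 y2 hag hq
        have ht : tips θ1 x1 y1 (j - em) = tips θ2 x2 y2 (j - em) := by
          refine IotaDAGAux.tips_congr ?_ ?_ ?_ <;> intro k hk1 hk2
          · exact (hag k hk1 (by omega)).1
          · exact (hag k hk1 (by omega)).2.2.1
          · exact (hag k hk1 (by omega)).2.2.2
        have hFBeq : FB θ1 x1 y1 (h M) em κA i = FB θ2 x2 y2 (h M) em κA i := by
          refine IotaDAGAux.FB_congr ?_ ?_ ?_ <;> intro k hk1 hk2
          · exact (hag k hk1 (by omega)).1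
          · exact (hag k hk1 (by omega)).2.2.1
          · exact (hag k hk1 (by omega)).2.2.2
        rw [← ht, ← hFBeq]
        exact hq
      -- on the model event, some admissible tip exists
      have hcover : (DA ∩ Bs l) ∩ Mdl ⊆ ⋃ v, ((DA ∩ Bs l) ∩ Tv v) := by
        intro ω hω
        obtain ⟨hS, hM'⟩ := hω
        have hval : Valid (fun m => Θ m ω) (fun m => ε m ω) (fun m => X m ω)
            (fun m => Y m ω) := hM'.2
        have hθ1 : ∀ k, 1 ≤ k → 1 ≤ (fun m => Θ m ω) k := by
          intro k hk
          obtain ⟨kk, hk1, hk2, heq⟩ := (hM'.1 k hk).1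
          show 1 ≤ Θ k ω
          rw [heq]
          have h1m : (1 : ℕ) ∈ Set.Icc 1 M := Set.mem_Icc.2 ⟨le_rfl, by omega⟩
          have hkm : kk ∈ Set.Icc 1 M := Set.mem_Icc.2 ⟨hk1, hk2⟩
          have := hmono.monotoneOn h1m hkm hk1
          omega
        have he' : ∀ k, 1 ≤ k → em ≤ (fun m => ε m ω) k := by
          intro k hk
          show em ≤ ε k ω
          rw [hemdef]
          exact Finset.min'_le _ _ ((hM'.1 k hk).2)
        have hAω : StepA (fun m => Θ m ω) (fun m => ε m ω) (fun m => X m ω)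
            (fun m => Y m ω) (h M) em κA i := hS.1.2
        obtain ⟨v, hv1, hv2⟩ := IotaDAGAux.det_exists hval hθ1 he' hAω hhM2 hem1 hκnat
          (by omega : i + κA ≤ (j - em) + em) (by omega : j - em ≤ i + κA)
        exact Set.mem_iUnion.2 ⟨v, hS, hv1, hv2⟩
      have hex : ∃ v, μ ((DA ∩ Bs l) ∩ Tv v) ≠ 0 := by
        by_contra hno
        push_neg at hno
        have hU : μ (⋃ v, (DA ∩ Bs l) ∩ Tv v) = 0 := measure_iUnion_null hno
        have h0 : μ ((DA ∩ Bs l) ∩ Mdl) = 0 := measure_mono_null hcover hU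
        have hd : μ ((DA ∩ Bs l) \ Mdl) = 0 :=
          measure_mono_null (fun ω hω => hω.2) hMdlnull
        have : μ (DA ∩ Bs l) = 0 := by
          have := measure_union_null h0 hd
          rwa [Set.inter_union_diff] at this
        exact absurd this (ne_of_gt hpos)
      obtain ⟨v, hvpos⟩ := hex
      set Sv : Set Ω := (DA ∩ Bs l) ∩ Tv v with hSvdef
      have hSvmeas : MeasurableSet[sigAlg Θ ε X Y (j - 1)] Sv := by
        refine MeasurableSet.inter (MeasurableSet.inter ?_ ?_) (hmeasTv v)
        · refine MeasurableSet.inter ?_ (hmeasA (j - 1) (by omega))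
          exact IotaDAGAux.sigAlg_mono Θ ε X Y (by omega : i - 1 ≤ j - 1) _ hD
        · exact hmeasBs l (j - 1) (by omega) (by omega)
      have hSvmeasΩ : MeasurableSet Sv :=
        IotaDAGAux.sigAlg_le Θ ε X Y hΘm hεm hXm hYm (j - 1) _ hSvmeas
      -- apply the conditional law
      have hlaweq := hlaw j hj1 M (Finset.mem_Icc.2 ⟨by omega, le_rfl⟩) em hemIε v v Sv hSvmeas
      set f : Ω → ℝ := fun ω =>
        if v ∈ tips (fun m => Θ m ω) (fun m => X m ω) (fun m => Y m ω) (j - em) ∧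
            v ∈ tips (fun m => Θ m ω) (fun m => X m ω) (fun m => Y m ω) (j - em)
        then pΘ M * pε em /
          (L (fun m => Θ m ω) (fun m => X m ω) (fun m => Y m ω) (j - em) : ℝ) ^ 2
        else 0 with hfdef
      have hfmeas : Measurable f := by
        refine Measurable.mono (IotaDAGAux.measFun_pre Θ ε X Y (j - 1)
          (fun θf ef xf yf =>
            if v ∈ tips θf xf yf (j - em) ∧ v ∈ tips θf xf yf (j - em)
            then pΘ M * pε em / (L θf xf yf (j - em) : ℝ) ^ 2 else 0) ?_)
          (IotaDAGAux.sigAlg_le Θ ε X Y hΘm hεm hXm hYm (j - 1)) le_rfl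
        intro θ1 e1 x1 y1 θ2 e2 x2 y2 hag
        have ht : tips θ1 x1 y1 (j - em) = tips θ2 x2 y2 (j - em) := by
          refine IotaDAGAux.tips_congr ?_ ?_ ?_ <;> intro k hk1 hk2
          · exact (hag k hk1 (by omega)).1
          · exact (hag k hk1 (by omega)).2.2.1
          · exact (hag k hk1 (by omega)).2.2.2
        have hL : L θ1 x1 y1 (j - em) = L θ2 x2 y2 (j - em) := by
          unfold L
          rw [ht]
        beta_reduce
        rw [ht, hL]
      have hcpos : 0 < pΘ M * pε em :=
        mul_pos (hpΘ M (Finset.mem_Icc.2 ⟨by omega, le_rfl⟩)) (hpε em hemIε)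
      have hfbdd : ∀ ω, |f ω| ≤ pΘ M * pε em := by
        intro ω
        simp only [hfdef]
        by_cases hc : v ∈ tips (fun m => Θ m ω) (fun m => X m ω) (fun m => Y m ω) (j - em) ∧
            v ∈ tips (fun m => Θ m ω) (fun m => X m ω) (fun m => Y m ω) (j - em)
        · rw [if_pos hc]
          have hL1 : 1 ≤ L (fun m => Θ m ω) (fun m => X m ω) (fun m => Y m ω) (j - em) := by
            have := (Set.ncard_pos IotaDAGAux.tips_finite).2 ⟨v, hc.1⟩
            exact this
          have hL1r : (1 : ℝ) ≤
              (L (fun m => Θ m ω) (fun m => X m ω) (fun m => Y m ω) (j - em) : ℝ) := by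
            exact_mod_cast hL1
          rw [abs_of_nonneg (by positivity)]
          apply div_le_self hcpos.le
          nlinarith
        · rw [if_neg hc]
          simpa using hcpos.le
      have hfint : MeasureTheory.Integrable f μ := by
        refine MeasureTheory.Integrable.mono' (MeasureTheory.integrable_const
          (pΘ M * pε em)) hfmeas.aestronglyMeasurable ?_
        exact Filter.Eventually.of_forall hfbdd
      set δ : ℝ := pΘ M * pε em / ((j - em + 1 : ℕ) : ℝ) ^ 2 with hδdef
      have hδpos : 0 < δ := by
        rw [hδdef]
        have : (0 : ℝ) < ((j - em + 1 : ℕ) : ℝ) := by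
          exact_mod_cast Nat.succ_pos _
        positivity
      have hlb : ∀ ω ∈ Sv, δ ≤ f ω := by
        intro ω hω
        have hvt := hω.2.1
        simp only [hfdef]
        rw [if_pos ⟨hvt, hvt⟩]
        have hL1 : 1 ≤ L (fun m => Θ m ω) (fun m => X m ω) (fun m => Y m ω) (j - em) :=
          (Set.ncard_pos IotaDAGAux.tips_finite).2 ⟨v, hvt⟩
        have hLle : L (fun m => Θ m ω) (fun m => X m ω) (fun m => Y m ω) (j - em)
            ≤ j - em + 1 := by
          have h1 := Set.ncard_le_ncard
            (IotaDAGAux.tips_subset_Iic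
              (θ := fun m => Θ m ω) (x := fun m => X m ω) (y := fun m => Y m ω)
              (n := j - em)) (Set.finite_Iic _)
          have h2 : (Set.Iic (j - em)).ncard = j - em + 1 := by
            rw [← Finset.coe_Iic, Set.ncard_coe_finset, Nat.card_Iic]
          rw [h2] at h1
          exact h1
        have hL1r : (1 : ℝ) ≤
            (L (fun m => Θ m ω) (fun m => X m ω) (fun m => Y m ω) (j - em) : ℝ) := by
          exact_mod_cast hL1
        have hLler : (L (fun m => Θ m ω) (fun m => X m ω) (fun m => Y m ω) (j - em) : ℝ)
            ≤ ((j - em + 1 : ℕ) : ℝ) := by exact_mod_cast hLle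
        rw [hδdef]
        gcongr
      have hmono' : δ * (μ Sv).toReal ≤ ∫ ω in Sv, f ω ∂μ := by
        have hci : MeasureTheory.IntegrableOn (fun _ => δ) Sv μ := by
          exact MeasureTheory.integrableOn_const (measure_ne_top μ Sv)
        have := MeasureTheory.setIntegral_mono_on hci hfint.integrableOn hSvmeasΩ hlb
        rwa [MeasureTheory.setIntegral_const, smul_eq_mul, mul_comm] at this
      have hSvtoReal : 0 < (μ Sv).toReal :=
        ENNReal.toReal_pos hvpos (measure_ne_top μ Sv)
      have hfinal : 0 < (μ (Sv ∩ {ω | Θ j ω = h M ∧ ε j ω = em ∧ X j ω = v ∧ Y j ω = v})).toReal := by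
        rw [hlaweq]
        calc (0 : ℝ) < δ * (μ Sv).toReal := mul_pos hδpos hSvtoReal
          _ ≤ _ := hmono'
      have hEvne : μ (Sv ∩ {ω | Θ j ω = h M ∧ ε j ω = em ∧ X j ω = v ∧ Y j ω = v}) ≠ 0 := by
        intro h0
        rw [h0] at hfinal
        simp at hfinal
      have hsubset : Sv ∩ {ω | Θ j ω = h M ∧ ε j ω = em ∧ X j ω = v ∧ Y j ω = v}
          ⊆ DA ∩ Bs (l + 1) := by
        rintro ω ⟨⟨⟨hDAω, hBlω⟩, hTvω⟩, hEvω⟩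
        refine ⟨hDAω, ?_⟩
        intro j' h1 h2 h3
        by_cases hc : j' < i + κA + l
        · exact hBlω j' h1 h2 hc
        · have hj' : j' = j := by omega
          subst hj'
          refine ⟨hEvω.1, hEvω.2.1, by rw [hEvω.2.2.1, hEvω.2.2.2], ?_⟩
          rw [hEvω.2.2.1]
          exact ⟨hTvω.1, hTvω.2⟩
      calc (0 : ENNReal) < μ (Sv ∩ {ω | Θ j ω = h M ∧ ε j ω = em ∧ X j ω = v ∧ Y j ω = v}) :=
            pos_iff_ne_zero.2 hEvne
        _ ≤ μ (DA ∩ Bs (l + 1)) := measure_mono hsubset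
  -- conclude
  have hDAmeasΩ : MeasurableSet DA := by
    refine IotaDAGAux.sigAlg_le Θ ε X Y hΘm hεm hXm hYm (i + κA) _ ?_
    exact MeasurableSet.inter (IotaDAGAux.sigAlg_mono Θ ε X Y (by omega : i - 1 ≤ i + κA) _ hD)
      (hmeasA (i + κA) (by omega))
  have hBeq : Bs (em + 1) = {ω | StepB (fun m => Θ m ω) (fun m => ε m ω)
      (fun m => X m ω) (fun m => Y m ω) (h M) em κA (κA + em + 1) i} := by
    ext ω
    constructor
    · intro hw j' h1 h2 h3
      exact hw j' h1 h2 (by omega)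
    · intro hw j' h1 h2 h3
      exact hw j' h1 h2 (by omega)
  have hfin := key (em + 1) le_rfl
  rw [hBeq] at hfin
  rw [ProbabilityTheory.cond_apply hDAmeasΩ]
  exact ENNReal.mul_pos (ENNReal.inv_ne_zero.2 (measure_ne_top μ DA)) (ne_of_gt hfin)
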